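/- Let P ⊂ SL(3,ℝ) be the upper triangular subgroup and X = E_{21} + E_{31} + E_{32}. There do NOT exist an upper triangular unipotent matrix r and a strictly lower triangular matrix Y such that exp(−(t/(t+1))Y)·r·exp(tX) is upper triangular for all t in a neighbourhood of 0; hence the distinguished curve t ↦ exp(tX) mod P admits only affine reparameterisations. -/

import Mathlib

open Matrix

set_option maxHeartbeats 1600000

lemma exp_cube_aux (A : Matrix (Fin 3) (Fin 3) ℝ) (h : A ^ 3 = 0) :
    NormedSpace.exp A = 1 + A + (2:ℝ)⁻¹ • A ^ 2 := by
  rw [NormedSpace.exp_eq_tsum (𝕂 := ℝ)]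
  have hzero : ∀ n ∉ Finset.range 3, ((n.factorial : ℝ)⁻¹) • A ^ n = 0 := by
    intro n hn
    have h3 : 3 ≤ n := by simpa using hn
    have : A ^ n = 0 := by
      have : A ^ n = A ^ 3 * A ^ (n - 3) := by rw [← pow_add]; congr 1; omega
      rw [this, h, zero_mul]
    rw [this, smul_zero]
  simp only []
  rw [tsum_eq_sum hzero]
  simp [Finset.sum_range_succ, Nat.factorial]

lemma poly_aux (a1 a2 a3 a4 δ : ℝ) (hδ : 0 < δ)
    (h : ∀ t ∈ Set.Ioo (0:ℝ) δ, a1*t + a2*t^2 + a3*t^3 + a4*t^4 = 0) :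
    a1 = 0 ∧ a2 = 0 ∧ a3 = 0 ∧ a4 = 0 := by
  have hP : (Polynomial.C a1 * Polynomial.X + Polynomial.C a2 * Polynomial.X ^ 2
      + Polynomial.C a3 * Polynomial.X ^ 3 + Polynomial.C a4 * Polynomial.X ^ 4 :
        Polynomial ℝ) = 0 := by
    apply Polynomial.eq_zero_of_infinite_isRoot
    apply Set.Infinite.mono _ (Set.Ioo_infinite hδ)
    intro t ht
    simp only [Set.mem_setOf_eq, Polynomial.IsRoot, Polynomial.eval_add, Polynomial.eval_mul,
      Polynomial.eval_C, Polynomial.eval_pow, Polynomial.eval_X]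
    linarith [h t ht]
  refine ⟨?_, ?_, ?_, ?_⟩
  · have := congrArg (fun P => Polynomial.coeff P 1) hP; simpa using this
  · have := congrArg (fun P => Polynomial.coeff P 2) hP; simpa using this
  · have := congrArg (fun P => Polynomial.coeff P 3) hP; simpa using this
  · have := congrArg (fun P => Polynomial.coeff P 4) hP; simpa using this

lemma entry10_aux (a b c p q w s t : ℝ) :
    (((1 + s • (!![0,0,0; p,0,0; q,w,0] : Matrix (Fin 3) (Fin 3) ℝ)
        + (2:ℝ)⁻¹ • (s • (!![0,0,0; p,0,0; q,w,0] : Matrix (Fin 3) (Fin 3) ℝ)) ^ 2)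
      * !![1,a,b; 0,1,c; 0,0,1]
      * (1 + t • (!![0,0,0;1,0,0;1,1,0] : Matrix (Fin 3) (Fin 3) ℝ)
        + (2:ℝ)⁻¹ • (t • (!![0,0,0;1,0,0;1,1,0] : Matrix (Fin 3) (Fin 3) ℝ)) ^ 2)) :
        Matrix (Fin 3) (Fin 3) ℝ) 1 0
    = s*p*(1 + a*t + b*(t + t^2/2)) + (t + c*(t + t^2/2)) := by
  simp [Matrix.mul_apply, Fin.sum_univ_three, Matrix.one_apply, pow_two, Matrix.add_apply,
    Matrix.smul_apply, Matrix.vecHead, Matrix.vecTail]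
  ring

lemma entry21_aux (a b c p q w s t : ℝ) :
    (((1 + s • (!![0,0,0; p,0,0; q,w,0] : Matrix (Fin 3) (Fin 3) ℝ)
        + (2:ℝ)⁻¹ • (s • (!![0,0,0; p,0,0; q,w,0] : Matrix (Fin 3) (Fin 3) ℝ)) ^ 2)
      * !![1,a,b; 0,1,c; 0,0,1]
      * (1 + t • (!![0,0,0;1,0,0;1,1,0] : Matrix (Fin 3) (Fin 3) ℝ)
        + (2:ℝ)⁻¹ • (t • (!![0,0,0;1,0,0;1,1,0] : Matrix (Fin 3) (Fin 3) ℝ)) ^ 2)) :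
        Matrix (Fin 3) (Fin 3) ℝ) 2 1
    = (s*q + s^2*p*w/2)*(a + b*t) + s*w*(1 + c*t) + t := by
  simp [Matrix.mul_apply, Fin.sum_univ_three, Matrix.one_apply, pow_two, Matrix.add_apply,
    Matrix.smul_apply, Matrix.vecHead, Matrix.vecTail]
  ring

lemma entry20_aux (a b c p q w s t : ℝ) :
    (((1 + s • (!![0,0,0; p,0,0; q,w,0] : Matrix (Fin 3) (Fin 3) ℝ)
        + (2:ℝ)⁻¹ • (s • (!![0,0,0; p,0,0; q,w,0] : Matrix (Fin 3) (Fin 3) ℝ)) ^ 2)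
      * !![1,a,b; 0,1,c; 0,0,1]
      * (1 + t • (!![0,0,0;1,0,0;1,1,0] : Matrix (Fin 3) (Fin 3) ℝ)
        + (2:ℝ)⁻¹ • (t • (!![0,0,0;1,0,0;1,1,0] : Matrix (Fin 3) (Fin 3) ℝ)) ^ 2)) :
        Matrix (Fin 3) (Fin 3) ℝ) 2 0
    = (s*q + s^2*p*w/2)*(1 + a*t + b*(t + t^2/2)) + s*w*(t + c*(t + t^2/2)) + (t + t^2/2) := by
  simp [Matrix.mul_apply, Fin.sum_univ_three, Matrix.one_apply, pow_two, Matrix.add_apply,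
    Matrix.smul_apply, Matrix.vecHead, Matrix.vecTail]
  ring

/-- For `X = E₂₁ + E₃₁ + E₃₂` there are no upper triangular unipotent `r` and strictly lower
triangular `Y` with `exp(−(t/(t+1))Y)·r·exp(tX)` upper triangular for all `t` near `0`; hence
the distinguished curve `t ↦ exp(tX) mod P` admits only affine reparameterisations. -/
theorem stmt16 :
    ¬ ∃ r Y : Matrix (Fin 3) (Fin 3) ℝ,
      (∀ i j : Fin 3, (j : ℕ) < (i : ℕ) → r i j = 0) ∧ (∀ i : Fin 3, r i i = 1) ∧
      (∀ i j : Fin 3, (i : ℕ) ≤ (j : ℕ) → Y i j = 0) ∧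
      ∃ U ∈ nhds (0 : ℝ), ∀ t ∈ U, ∀ i j : Fin 3, (j : ℕ) < (i : ℕ) →
        (NormedSpace.exp (-(t / (t + 1)) • Y) * r
          * NormedSpace.exp (t • (single (1 : Fin 3) (0 : Fin 3) (1 : ℝ)
              + single (2 : Fin 3) (0 : Fin 3) (1 : ℝ)
              + single (2 : Fin 3) (1 : Fin 3) (1 : ℝ)))) i j = 0 := by
  rintro ⟨r, Y, hr0, hr1, hY0, U, hU, hlow⟩
  set a : ℝ := r 0 1 with ha
  set b : ℝ := r 0 2 with hb
  set c : ℝ := r 1 2 with hcdef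
  set p : ℝ := Y 1 0 with hpdef
  set q : ℝ := Y 2 0 with hqdef
  set w : ℝ := Y 2 1 with hwdef
  -- explicit forms of the matrices
  have hrm : r = !![1,a,b; 0,1,c; 0,0,1] := by
    ext i j
    fin_cases i <;> fin_cases j <;>
      simp [hr0 1 0 (by norm_num), hr0 2 0 (by norm_num), hr0 2 1 (by norm_num),
        hr1 0, hr1 1, hr1 2, ha, hb, hcdef, Matrix.vecHead, Matrix.vecTail]
  have hYm : Y = !![0,0,0; p,0,0; q,w,0] := by
    ext i j
    fin_cases i <;> fin_cases j <;>
      simp [hY0 0 0 (by norm_num), hY0 0 1 (by norm_num), hY0 0 2 (by norm_num),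
        hY0 1 1 (by norm_num), hY0 1 2 (by norm_num), hY0 2 2 (by norm_num),
        hpdef, hqdef, hwdef, Matrix.vecHead, Matrix.vecTail]
  have hXm : (single (1 : Fin 3) (0 : Fin 3) (1 : ℝ)
      + single (2 : Fin 3) (0 : Fin 3) (1 : ℝ)
      + single (2 : Fin 3) (1 : Fin 3) (1 : ℝ)) = !![0,0,0;1,0,0;1,1,0] := by
    ext i j
    fin_cases i <;> fin_cases j <;>
      simp [single, Matrix.vecHead, Matrix.vecTail]
  have hYcube : ∀ s : ℝ, (s • (!![0,0,0; p,0,0; q,w,0] : Matrix (Fin 3) (Fin 3) ℝ)) ^ 3 = 0 := by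
    intro s
    ext i j
    fin_cases i <;> fin_cases j <;>
      simp [pow_succ, Matrix.mul_apply, Fin.sum_univ_three, Matrix.smul_apply]
  have hXcube : ∀ t : ℝ, (t • (!![0,0,0;1,0,0;1,1,0] : Matrix (Fin 3) (Fin 3) ℝ)) ^ 3 = 0 := by
    intro t
    ext i j
    fin_cases i <;> fin_cases j <;>
      simp [pow_succ, Matrix.mul_apply, Fin.sum_univ_three, Matrix.smul_apply]
  -- extract a small interval inside U
  obtain ⟨δ₀, hδ₀, hball⟩ := Metric.mem_nhds_iff.mp hU
  set δ : ℝ := min δ₀ 1 with hδdef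
  have hδ : 0 < δ := lt_min hδ₀ one_pos
  have hmem : ∀ t ∈ Set.Ioo (0:ℝ) δ, t ∈ U := by
    intro t ht
    apply hball
    rw [Metric.mem_ball, Real.dist_eq, sub_zero, abs_of_pos ht.1]
    exact lt_of_lt_of_le ht.2 (min_le_left _ _)
  -- the three scalar conditions
  have key : ∀ t ∈ Set.Ioo (0:ℝ) δ,
      ((-(t/(t+1)))*p*(1 + a*t + b*(t + t^2/2)) + (t + c*(t + t^2/2)) = 0) ∧
      (((-(t/(t+1)))*q + (-(t/(t+1)))^2*p*w/2)*(a + b*t) + (-(t/(t+1)))*w*(1 + c*t) + t = 0) ∧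
      (((-(t/(t+1)))*q + (-(t/(t+1)))^2*p*w/2)*(1 + a*t + b*(t + t^2/2))
        + (-(t/(t+1)))*w*(t + c*(t + t^2/2)) + (t + t^2/2) = 0) := by
    intro t ht
    have htU := hmem t ht
    have hexpY : NormedSpace.exp (-(t / (t + 1)) • Y)
        = 1 + (-(t/(t+1))) • (!![0,0,0; p,0,0; q,w,0] : Matrix (Fin 3) (Fin 3) ℝ)
          + (2:ℝ)⁻¹ • ((-(t/(t+1))) • (!![0,0,0; p,0,0; q,w,0] : Matrix (Fin 3) (Fin 3) ℝ)) ^ 2 := by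
      rw [hYm]; exact exp_cube_aux _ (hYcube _)
    have hexpX : NormedSpace.exp (t • (single (1 : Fin 3) (0 : Fin 3) (1 : ℝ)
          + single (2 : Fin 3) (0 : Fin 3) (1 : ℝ)
          + single (2 : Fin 3) (1 : Fin 3) (1 : ℝ)))
        = 1 + t • (!![0,0,0;1,0,0;1,1,0] : Matrix (Fin 3) (Fin 3) ℝ)
          + (2:ℝ)⁻¹ • (t • (!![0,0,0;1,0,0;1,1,0] : Matrix (Fin 3) (Fin 3) ℝ)) ^ 2 := by
      rw [hXm]; exact exp_cube_aux _ (hXcube _)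
    have h10 := hlow t htU 1 0 (by norm_num)
    have h21 := hlow t htU 2 1 (by norm_num)
    have h20 := hlow t htU 2 0 (by norm_num)
    rw [hexpY, hexpX, hrm] at h10 h21 h20
    rw [entry10_aux a b c p q w (-(t/(t+1))) t] at h10
    rw [entry21_aux a b c p q w (-(t/(t+1))) t] at h21
    rw [entry20_aux a b c p q w (-(t/(t+1))) t] at h20
    exact ⟨h10, h21, h20⟩
  -- turn each condition into polynomial identities in t and extract coefficients
  have P10 : ∀ t ∈ Set.Ioo (0:ℝ) δ,
      (1+c-p)*t + (2+5/2*c-p-a*p-b*p)*t^2 + (1+2*c-a*p-3/2*b*p)*t^3 + (1/2*c-1/2*b*p)*t^4 = 0 := by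
    intro t ht
    have h := (key t ht).1
    have ht1 : t + 1 ≠ 0 := by nlinarith [ht.1]
    have e : (1+c-p)*t + (2+5/2*c-p-a*p-b*p)*t^2 + (1+2*c-a*p-3/2*b*p)*t^3 + (1/2*c-1/2*b*p)*t^4
        = ((-(t/(t+1)))*p*(1 + a*t + b*(t + t^2/2)) + (t + c*(t + t^2/2))) * (t+1)^2 := by
      field_simp
      ring
    rw [e, h, zero_mul]
  have P21 : ∀ t ∈ Set.Ioo (0:ℝ) δ,
      (1-a*q-w)*t + (2-a*q+1/2*a*p*w-w-b*q-c*w)*t^2 + (1-b*q+1/2*b*p*w-c*w)*t^3 + 0*t^4 = 0 := by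
    intro t ht
    have h := (key t ht).2.1
    have ht1 : t + 1 ≠ 0 := by nlinarith [ht.1]
    have e : (1-a*q-w)*t + (2-a*q+1/2*a*p*w-w-b*q-c*w)*t^2 + (1-b*q+1/2*b*p*w-c*w)*t^3 + 0*t^4
        = (((-(t/(t+1)))*q + (-(t/(t+1)))^2*p*w/2)*(a + b*t) + (-(t/(t+1)))*w*(1 + c*t) + t)
          * (t+1)^2 := by
      field_simp
      ring
    rw [e, h, zero_mul]
  have P20 : ∀ t ∈ Set.Ioo (0:ℝ) δ,
      (1-q)*t + (5/2-q+1/2*p*w-a*q-w-b*q-c*w)*t^2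
        + (2-a*q+1/2*a*p*w-w-3/2*b*q+1/2*b*p*w-3/2*c*w)*t^3
        + (1/2-1/2*b*q+1/4*b*p*w-1/2*c*w)*t^4 = 0 := by
    intro t ht
    have h := (key t ht).2.2
    have ht1 : t + 1 ≠ 0 := by nlinarith [ht.1]
    have e : (1-q)*t + (5/2-q+1/2*p*w-a*q-w-b*q-c*w)*t^2
        + (2-a*q+1/2*a*p*w-w-3/2*b*q+1/2*b*p*w-3/2*c*w)*t^3
        + (1/2-1/2*b*q+1/4*b*p*w-1/2*c*w)*t^4
        = (((-(t/(t+1)))*q + (-(t/(t+1)))^2*p*w/2)*(1 + a*t + b*(t + t^2/2))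
          + (-(t/(t+1)))*w*(t + c*(t + t^2/2)) + (t + t^2/2)) * (t+1)^2 := by
      field_simp
      ring
    rw [e, h, zero_mul]
  obtain ⟨N1, N2, _, N4⟩ := poly_aux _ _ _ _ δ hδ P10
  obtain ⟨B1, B2, B3, _⟩ := poly_aux _ _ _ _ δ hδ P21
  obtain ⟨C1, C2, _, _⟩ := poly_aux _ _ _ _ δ hδ P20
  -- now pure algebra in a b c p q w
  have hq : q = 1 := by linarith
  rw [hq] at B1 B2 B3 C2
  have hw : w = 1 - a := by linarith
  rw [hw] at B2 B3 C2
  have hp : p*(1-a)^2 = 1 := by linear_combination 2*C2 - 2*B2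
  have hc : c = p*b := by linear_combination 2*N4
  have hbb : (1-a) - b*(1-a) - b/2 = 0 := by
    linear_combination (1-a)*B3 + (1-a)^2*hc + (b/2)*hp
  have hpne : p ≠ 0 := by
    intro h0
    rw [h0] at hp
    simp at hp
  have hpb : p*(1-b) = 1 := by linear_combination -N1 + hc
  have hb2 : 1 - b = (1-a)^2 := by
    have := hpb.trans hp.symm
    exact mul_left_cancel₀ hpne this
  have hiii : 2*(1-a)^3 + (1-a)^2 - 1 = 0 := by
    linear_combination 2*hbb + (-(2*(1-a))-1)*hb2
  have hA2 : 1 + 3/2*c - p*(a+b) = 0 := by linear_combination N2 - N1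
  have step1 : 1 - p + 2*p*(1-a) = 0 := by
    linear_combination 2*hA2 - 3*hc + p*hb2 + hp
  have hiv : (1-a)^2 + 2*(1-a) - 1 = 0 := by
    linear_combination (1-a)^2*step1 + (1-2*(1-a))*hp
  have hu : 8*(1-a) - 4 = 0 := by
    linear_combination hiii + (3-2*(1-a))*hiv
  have : (1:ℝ) - a = 1/2 := by linarith
  rw [this] at hiv
  norm_num at hiv
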